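/- Let v ≥ 2 be an integer and let M be a v×v real symmetric positive definite matrix such that M·1_v = v·1_v and tr(M) = T with T > v. Then tr(M⁻¹) ≥ (v−1)²/(T − v) + 1/v. -/

import Mathlib

open Matrix Finset Real

/-- Cauchy–Schwarz for the Frobenius inner product. -/
lemma trace_cs {v : ℕ} (X Y : Matrix (Fin v) (Fin v) ℝ) :
    (Xᵀ * Y).trace ^ 2 ≤ (Xᵀ * X).trace * (Yᵀ * Y).trace := by
  have h : ∀ A B : Matrix (Fin v) (Fin v) ℝ,
      (Aᵀ * B).trace = ∑ p : Fin v × Fin v, A p.1 p.2 * B p.1 p.2 := by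
    intro A B
    rw [Matrix.trace, Fintype.sum_prod_type]
    simp [Matrix.diag, Matrix.mul_apply, Matrix.transpose_apply]
    exact Finset.sum_comm
  rw [h, h, h]
  have := Finset.sum_mul_sq_le_sq_mul_sq Finset.univ
    (fun p : Fin v × Fin v => X p.1 p.2) (fun p : Fin v × Fin v => Y p.1 p.2)
  simpa [pow_two] using this

open scoped MatrixOrder in
noncomputable def msqrt {v : ℕ} (M : Matrix (Fin v) (Fin v) ℝ) : Matrix (Fin v) (Fin v) ℝ :=
  CFC.sqrt M

open scoped MatrixOrder in
lemma msqrt_mul_self {v : ℕ} {M : Matrix (Fin v) (Fin v) ℝ} (hM : M.PosSemidef) :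
    msqrt M * msqrt M = M :=
  CFC.sqrt_mul_sqrt_self M hM.nonneg

open scoped MatrixOrder in
lemma msqrt_posSemidef {v : ℕ} (M : Matrix (Fin v) (Fin v) ℝ) : (msqrt M).PosSemidef :=
  (CFC.sqrt_nonneg M).posSemidef

/-- for a symmetric positive definite `v × v` matrix `M` with
`M·1 = v·1` and `tr(M) = T > v`, one has `tr(M⁻¹) ≥ (v-1)²/(T-v) + 1/v`. -/
theorem stmt_7 (v : ℕ) (hv : 2 ≤ v) (M : Matrix (Fin v) (Fin v) ℝ)
    (hsym : M.IsSymm) (hpd : M.PosDef)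
    (hone : M.mulVec (fun _ => 1) = fun _ => (v : ℝ))
    (T : ℝ) (hT : M.trace = T) (hTv : (v : ℝ) < T) :
    ((v : ℝ) - 1) ^ 2 / (T - v) + 1 / v ≤ M⁻¹.trace := by
  have hv0 : (0 : ℝ) < v := by positivity
  have hvne : (v : ℝ) ≠ 0 := hv0.ne'
  -- the all-ones matrix
  set J : Matrix (Fin v) (Fin v) ℝ := Matrix.of (fun _ _ => (1 : ℝ)) with hJ
  have hJJ : J * J = (v : ℝ) • J := by
    ext i j
    simp [hJ, Matrix.mul_apply]
  have htrJ : J.trace = (v : ℝ) := by simp [Matrix.trace, hJ]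
  have hMJ : M * J = (v : ℝ) • J := by
    ext i j
    have := congrFun hone i
    simp [Matrix.mulVec, dotProduct] at this
    simp [hJ, Matrix.mul_apply, this]
  -- invertibility of M
  have hMdet : IsUnit M.det := hpd.det_pos.ne'.isUnit
  have hMM : M⁻¹ * M = 1 := Matrix.nonsing_inv_mul M hMdet
  have hMinvJ : M⁻¹ * J = (v : ℝ)⁻¹ • J := by
    have h1 : M⁻¹ * (M * J) = (v : ℝ) • (M⁻¹ * J) := by
      rw [hMJ, Matrix.mul_smul]
    rw [← Matrix.mul_assoc, hMM, Matrix.one_mul] at h1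
    have := congrArg (fun A => (v : ℝ)⁻¹ • A) h1
    simpa [smul_smul, inv_mul_cancel₀ hvne] using this.symm
  -- projection P
  set P : Matrix (Fin v) (Fin v) ℝ := 1 - (v : ℝ)⁻¹ • J with hP
  have hPT : Pᵀ = P := by
    rw [hP]
    ext i j
    simp [Matrix.one_apply, hJ, eq_comm]
  have hPP : P * P = P := by
    have hq : ((v : ℝ)⁻¹ • J) * ((v : ℝ)⁻¹ • J) = (v : ℝ)⁻¹ • J := by
      rw [Matrix.smul_mul, Matrix.mul_smul, hJJ, smul_smul, smul_smul]
      congr 1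
      field_simp
    rw [hP, sub_mul, mul_sub, mul_sub, Matrix.one_mul, Matrix.one_mul,
      Matrix.mul_one, hq]
    abel
  have htrP : P.trace = (v : ℝ) - 1 := by
    rw [hP, Matrix.trace_sub, Matrix.trace_one, Matrix.trace_smul, htrJ]
    simp [inv_mul_cancel₀ hvne]
  -- square root S of M
  set S : Matrix (Fin v) (Fin v) ℝ := msqrt M with hS
  have hSS : S * S = M := msqrt_mul_self hpd.posSemidef
  have hST : Sᵀ = S := by
    have h := (msqrt_posSemidef M).1
    rw [Matrix.IsHermitian, Matrix.conjTranspose_eq_transpose_of_trivial] at h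
    exact h
  have hSdet : IsUnit S.det := by
    have hdm : M.det = S.det * S.det := by rw [← hSS, Matrix.det_mul]
    have : M.det ≠ 0 := hpd.det_pos.ne'
    rw [hdm] at this
    exact (mul_ne_zero_iff.mp this).1.isUnit
  have hSSinv : S * S⁻¹ = 1 := Matrix.mul_nonsing_inv S hSdet
  have hSinvT : (S⁻¹)ᵀ = S⁻¹ := by rw [Matrix.transpose_nonsing_inv, hST]
  have hSinvSinv : S⁻¹ * S⁻¹ = M⁻¹ := by rw [← Matrix.mul_inv_rev, hSS]
  -- the three traces
  set X : Matrix (Fin v) (Fin v) ℝ := S * P with hX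
  set Y : Matrix (Fin v) (Fin v) ℝ := S⁻¹ * P with hY
  have t1 : (Xᵀ * Y).trace = (v : ℝ) - 1 := by
    rw [hX, hY, Matrix.transpose_mul, hPT, hST]
    have : P * S * (S⁻¹ * P) = P := by
      rw [Matrix.mul_assoc, ← Matrix.mul_assoc S, hSSinv, Matrix.one_mul, hPP]
    rw [this, htrP]
  have hMP : (M * P).trace = T - v := by
    rw [hP, mul_sub, Matrix.mul_one, Matrix.mul_smul, hMJ, Matrix.trace_sub,
      Matrix.trace_smul, Matrix.trace_smul, htrJ, hT]
    simp only [smul_eq_mul]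
    field_simp
  have t2 : (Xᵀ * X).trace = T - v := by
    rw [hX, Matrix.transpose_mul, hPT, hST]
    have : P * S * (S * P) = P * M * P := by
      rw [Matrix.mul_assoc, ← Matrix.mul_assoc S, hSS, Matrix.mul_assoc]
    rw [this, Matrix.trace_mul_cycle, hPP, Matrix.trace_mul_comm, hMP]
  have hMinvP : (M⁻¹ * P).trace = M⁻¹.trace - (v : ℝ)⁻¹ := by
    rw [hP, mul_sub, Matrix.mul_one, Matrix.mul_smul, hMinvJ, Matrix.trace_sub,
      Matrix.trace_smul, Matrix.trace_smul, htrJ]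
    simp [smul_eq_mul, inv_mul_cancel₀ hvne]
  have t3 : (Yᵀ * Y).trace = M⁻¹.trace - (v : ℝ)⁻¹ := by
    rw [hY, Matrix.transpose_mul, hPT, hSinvT]
    have : P * S⁻¹ * (S⁻¹ * P) = P * M⁻¹ * P := by
      rw [Matrix.mul_assoc, ← Matrix.mul_assoc S⁻¹, hSinvSinv, Matrix.mul_assoc]
    rw [this, Matrix.trace_mul_cycle, hPP, Matrix.trace_mul_comm, hMinvP]
  -- Cauchy–Schwarz
  have key := trace_cs X Y
  rw [t1, t2, t3] at key
  have hTv' : (0 : ℝ) < T - v := by linarith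
  have h1 : ((v : ℝ) - 1) ^ 2 / (T - v) ≤ M⁻¹.trace - (v : ℝ)⁻¹ := by
    rw [div_le_iff₀ hTv']
    linarith [key]
  have h2 : (1 : ℝ) / v = (v : ℝ)⁻¹ := one_div _
  linarith [h1]
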